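/- For fixed b ∈ ℝ, the function t ↦ Φ⁻¹(Φ(t)/Φ(b)) defined on (-∞, b) is not concave. (This shows Ehrhard's inequality fails for the Gaussian measure conditioned on a half-line, and hence for general CD(1,∞) measures.) -/

import Mathlib

open Real Set MeasureTheory intervalIntegral

/-- Standard Gaussian density. -/
noncomputable def phi (t : ℝ) : ℝ := (Real.sqrt (2 * Real.pi))⁻¹ * Real.exp (-t ^ 2 / 2)

/-- Standard Gaussian cumulative distribution function. -/
noncomputable def Phi (t : ℝ) : ℝ := ∫ s in Set.Iic t, phi s

lemma phi_pos (t : ℝ) : 0 < phi t := by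
  have h : 0 < Real.sqrt (2 * Real.pi) := Real.sqrt_pos.2 (by positivity)
  exact mul_pos (inv_pos.2 h) (Real.exp_pos _)

lemma phi_le (t : ℝ) : phi t ≤ (Real.sqrt (2 * Real.pi))⁻¹ := by
  have h : Real.exp (-t ^ 2 / 2) ≤ 1 := Real.exp_le_one_iff.2 (by nlinarith [sq_nonneg t])
  have h0 : (0:ℝ) ≤ (Real.sqrt (2 * Real.pi))⁻¹ := by positivity
  calc phi t ≤ (Real.sqrt (2 * Real.pi))⁻¹ * 1 := mul_le_mul_of_nonneg_left h h0
    _ = _ := mul_one _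

lemma phi_integrable : Integrable phi := by
  have h : Integrable (fun x : ℝ => Real.exp (-(1/2 : ℝ) * x ^ 2)) :=
    integrable_exp_neg_mul_sq (by norm_num)
  have := h.const_mul (Real.sqrt (2 * Real.pi))⁻¹
  convert this using 2 with x
  unfold phi
  ring_nf

lemma phi_integral : ∫ x, phi x = 1 := by
  have h := integral_gaussian (1/2 : ℝ)
  have h2 : ∫ x : ℝ, Real.exp (-(1/2 : ℝ) * x ^ 2) = Real.sqrt (2 * Real.pi) := by
    rw [h]; congr 1; ring
  unfold phi
  rw [MeasureTheory.integral_const_mul]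
  have : ∀ x : ℝ, Real.exp (-x ^ 2 / 2) = Real.exp (-(1/2 : ℝ) * x ^ 2) := by
    intro x; ring_nf
  simp_rw [this, h2]
  rw [inv_mul_cancel₀]
  positivity

lemma phi_continuous : Continuous phi := by
  unfold phi; continuity

lemma Phi_sub (a t : ℝ) : Phi t - Phi a = ∫ x in a..t, phi x :=
  integral_Iic_sub_Iic phi_integrable.integrableOn phi_integrable.integrableOn

lemma Phi_strictMono : StrictMono Phi := by
  intro a t hat
  have h : 0 < ∫ x in a..t, phi x :=
    intervalIntegral_pos_of_pos (phi_integrable.intervalIntegrable) (fun x => phi_pos x) hat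
  linarith [Phi_sub a t]

lemma Phi_pos (t : ℝ) : 0 < Phi t := by
  have h := Phi_strictMono (show t - 1 < t by linarith)
  have h0 : 0 ≤ Phi (t - 1) :=
    MeasureTheory.setIntegral_nonneg measurableSet_Iic (fun x _ => (phi_pos x).le)
  linarith

lemma Phi_lt_one (t : ℝ) : Phi t < 1 := by
  have h := Phi_strictMono (show t < t + 1 by linarith)
  have h1 : Phi (t + 1) ≤ 1 := by
    rw [← phi_integral]
    exact MeasureTheory.setIntegral_le_integral phi_integrable
      (Filter.Eventually.of_forall fun x => (phi_pos x).le)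
  linarith

lemma Phi_tail_le {a t : ℝ} (h : a ≤ t) :
    Phi t - Phi a ≤ (t - a) * (Real.sqrt (2 * Real.pi))⁻¹ := by
  rw [Phi_sub a t]
  calc (∫ x in a..t, phi x) ≤ ∫ _x in a..t, (Real.sqrt (2 * Real.pi))⁻¹ :=
        intervalIntegral.integral_mono_on h (phi_integrable.intervalIntegrable)
          (intervalIntegrable_const) (fun x _ => phi_le x)
    _ = (t - a) * (Real.sqrt (2 * Real.pi))⁻¹ := by
        rw [intervalIntegral.integral_const, smul_eq_mul]

/-- For every fixed b, the function `t ↦ Φ⁻¹(Φ(t)/Φ(b))` is not concave on `(-∞, b)`. -/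
theorem stmt_12 (Φinv : ℝ → ℝ)
    (hinv : ∀ v ∈ Set.Ioo (0:ℝ) 1, Phi (Φinv v) = v)
    (hinv' : ∀ t : ℝ, Φinv (Phi t) = t) :
    ∀ b : ℝ, ¬ ConcaveOn ℝ (Set.Iio b) (fun t => Φinv (Phi t / Phi b)) := by
  intro b hconc
  set f : ℝ → ℝ := fun t => Φinv (Phi t / Phi b) with hf
  set c : ℝ := (Real.sqrt (2 * Real.pi))⁻¹ with hc
  have hcpos : 0 < c := by rw [hc]; positivity
  set t1 : ℝ := b - 2 with ht1
  set t2 : ℝ := b - 1 with ht2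
  set M : ℝ := 2 * (|f t1| + |f t2|) + 1 with hM
  have hMpos : 0 < M := by positivity
  have hPb : 0 < Phi b := Phi_pos b
  set ε : ℝ := (1 - Phi M) * Phi b with hε
  have hεpos : 0 < ε := mul_pos (by linarith [Phi_lt_one M]) hPb
  set δ : ℝ := min (ε / (2 * c)) (1 / 2) with hδ
  have hδpos : 0 < δ := lt_min (by positivity) (by norm_num)
  have hδle : δ ≤ ε / (2 * c) := min_le_left _ _
  have hδle2 : δ ≤ 1 / 2 := min_le_right _ _
  set t3 : ℝ := b - δ with ht3
  have ht3lt : t3 < b := by simp [ht3]; linarith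
  have ht2lt3 : t2 < t3 := by rw [ht2, ht3]; linarith
  -- Phi t3 > Phi M * Phi b
  have htail : Phi b - Phi t3 ≤ δ * c :=
    calc Phi b - Phi t3 ≤ (b - t3) * c := Phi_tail_le ht3lt.le
      _ = δ * c := by rw [ht3]; ring
  have hPt3 : Phi M * Phi b < Phi t3 := by
    have h1 : δ * c ≤ ε / 2 := by
      rw [le_div_iff₀ (by positivity : (0:ℝ) < 2 * c)] at hδle
      nlinarith
    nlinarith
  have hPt3pos : 0 < Phi t3 := Phi_pos t3
  have hPt3lt : Phi t3 < Phi b := Phi_strictMono ht3lt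
  have hmem : Phi t3 / Phi b ∈ Set.Ioo (0:ℝ) 1 := by
    constructor
    · positivity
    · rw [div_lt_one hPb]; exact hPt3lt
  have hPhif : Phi (f t3) = Phi t3 / Phi b := hinv _ hmem
  have hft3 : M < f t3 := by
    by_contra h
    push_neg at h
    have := Phi_strictMono.monotone h
    rw [hPhif] at this
    rw [div_le_iff₀ hPb] at this
    nlinarith
  -- concavity inequality at t1 < t2 < t3
  set lam : ℝ := 1 / (t3 - t1) with hlam
  have h31 : 1 < t3 - t1 := by rw [ht3, ht1]; linarith
  have h31' : t3 - t1 < 2 := by rw [ht3, ht1]; linarith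
  have hlam1 : lam < 1 := by rw [hlam, div_lt_one (by linarith)]; linarith
  have hlamhalf : 1 / 2 < lam := by
    rw [hlam, div_lt_div_iff₀ (by norm_num) (by linarith)]; linarith
  have hcomb : (1 - lam) • t1 + lam • t3 = t2 := by
    have hne : t3 - t1 ≠ 0 := by linarith
    rw [ht2, ht1, hlam]
    field_simp
    rw [ht3, ht1]
    have h2d : (2:ℝ) - δ ≠ 0 := by linarith
    rw [smul_eq_mul, smul_eq_mul, show b - δ - (b - 2) = 2 - δ by ring, div_mul_eq_mul_div, div_mul_eq_mul_div, ← add_div, div_eq_iff h2d]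
    ring
  have hkey := hconc.2 (show t1 ∈ Set.Iio b by rw [Set.mem_Iio, ht1]; linarith)
    (show t3 ∈ Set.Iio b from ht3lt)
    (show (0:ℝ) ≤ 1 - lam by linarith)
    (show (0:ℝ) ≤ lam by linarith) (by ring)
  rw [hcomb] at hkey
  simp only [smul_eq_mul] at hkey
  -- hkey : (1 - lam) * f t1 + lam * f t3 ≤ f t2
  have ha1 : -|f t1| ≤ f t1 := neg_abs_le _
  have ha2 : f t2 ≤ |f t2| := le_abs_self _
  nlinarith [abs_nonneg (f t1), abs_nonneg (f t2)]
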